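/- Let p := ε·y + (ξ·h)·y² in the formal power series ring R[[y]] (with ε, ξ, h regarded as constants). Then the power series H := Σ_{k≥0} (F k)² · y^(2k) satisfies H · (1 − p²) = 1 in R[[y]]; that is, Σ_{k≥0} (F k)²·y^(2k) is the multiplicative inverse of 1 − (ε·y + ξ·h·y²)². (The generating-function identity H = 1/(1−p(y)²) of Section 4.) -/

import Mathlib

/- Context: `R = ℤ[ε,ξ,h]/(2ε)`, `F 0 = 1`, `F 1 = ε`,
`F (m+2) = ε·F(m+1) + (ξh)·F m`.
Statement 0 (Lemma 4.1(1)): closed formula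
`F m = ∑_{a+2b=m} C(a+b,b) ε^a ξ^b h^b = ∑_{b=0}^{⌊m/2⌋} C(m-b,b) ε^(m-2b) (ξh)^b`. -/

noncomputable section

open MvPolynomial

abbrev Rpre : Type := MvPolynomial (Fin 3) ℤ

def Rideal : Ideal Rpre := Ideal.span {2 * X 0}

abbrev Rring : Type := Rpre ⧸ Rideal

def ε : Rring := Ideal.Quotient.mk Rideal (X 0)
def ξ : Rring := Ideal.Quotient.mk Rideal (X 1)
def h : Rring := Ideal.Quotient.mk Rideal (X 2)

def F : ℕ → Rring
  | 0 => 1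
  | 1 => ε
  | m + 2 => ε * F (m + 1) + (ξ * h) * F m

/- Statement 3: with `p = ε·y + (ξh)·y²` in `R[[y]]` and
`H = ∑_{k≥0} (F k)² y^(2k)`, one has `H · (1 - p²) = 1`. -/

def p : PowerSeries Rring :=
  PowerSeries.C ε * PowerSeries.X + PowerSeries.C (ξ * h) * PowerSeries.X ^ 2

def H : PowerSeries Rring :=
  PowerSeries.mk fun n => if Even n then (F (n / 2)) ^ 2 else 0

lemma two_eps : (2 : Rring) * ε = 0 := by
  have : ((2 * X 0 : Rpre) : Rring) = 0 :=
    Ideal.Quotient.eq_zero_iff_mem.mpr (Ideal.subset_span rfl)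
  simpa [ε, map_mul, map_ofNat] using this

lemma Fsq (m : ℕ) : F (m + 2) ^ 2 = ε ^ 2 * F (m + 1) ^ 2 + (ξ * h) ^ 2 * F m ^ 2 := by
  show (ε * F (m + 1) + (ξ * h) * F m) ^ 2 = _
  linear_combination (F (m + 1) * (ξ * h) * F m) * two_eps

lemma one_sub_p_sq : 1 - p ^ 2 =
    1 - PowerSeries.C (ε ^ 2) * PowerSeries.X ^ 2
      - PowerSeries.C ((ξ * h) ^ 2) * PowerSeries.X ^ 4 := by
  have h0 : (2 : Rring) * ε * (ξ * h) = 0 := by rw [two_eps, zero_mul]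
  have h1 : (PowerSeries.C) (2 * ε * (ξ * h)) = 0 := by rw [h0, map_zero]
  have h2 : (2 : PowerSeries Rring) * PowerSeries.C ε * PowerSeries.C (ξ * h) = 0 := by
    rw [← map_ofNat (PowerSeries.C) 2, ← map_mul, ← map_mul, h1]
  rw [p]
  simp only [map_pow]
  linear_combination (-(PowerSeries.X ^ 3)) * h2

theorem H_mul_one_sub_p_sq : H * (1 - p ^ 2) = 1 := by
  rw [one_sub_p_sq]
  ext n
  rw [mul_sub, mul_sub, mul_one, mul_left_comm H, mul_left_comm H]
  simp only [map_sub, PowerSeries.coeff_C_mul, PowerSeries.coeff_mul_X_pow',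
    PowerSeries.coeff_one, H, PowerSeries.coeff_mk]
  match n with
  | 0 => norm_num [F]
  | 1 => norm_num
  | 2 =>
    norm_num [F, show ¬ Even 1 by decide]
  | 3 => simp [show ¬ Even 3 by decide, show ¬ Even 1 by decide]
  | (n + 4) =>
    by_cases he : Even n
    · obtain ⟨k, rfl⟩ := he
      have e1 : k + k + 4 = 2 * (k + 2) := by ring
      have e2 : k + k + 4 - 2 = 2 * (k + 1) := by omega
      have e3 : k + k + 4 - 4 = 2 * k := by omega
      rw [e2, e3, e1]
      have l2 : 2 ≤ 2 * (k + 2) := by omega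
      have l4 : 4 ≤ 2 * (k + 2) := by omega
      have nz : 2 * (k + 2) ≠ 0 := by omega
      simp [l2, l4, nz, Nat.mul_div_cancel_left, Fsq k]
    · have e2 : n + 4 - 2 = n + 2 := rfl
      have e3 : n + 4 - 4 = n := rfl
      have g1 : ¬ Even (n + 4) := by
        simp only [Nat.even_add]; simp [he] <;> decide
      have g2 : ¬ Even (n + 2) := by
        simp only [Nat.even_add]; simp [he] <;> decide
      rw [e2, e3, if_neg g1, if_pos (by omega : 2 ≤ n + 4), if_neg g2,
        if_pos (by omega : 4 ≤ n + 4), if_neg he, if_neg (by omega : ¬ n + 4 = 0)]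
      ring


end
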